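/- arXiv:1212.5554 — 9 statements merged into one kernel-verified Lean document; each statement's English description precedes it below -/
import Mathlib

section
/- Let Q(X,Y) be a bivariate polynomial over a field F, let s be a positive integer, and let (α,β) ∈ F² be a root of Q with multiplicity at least s (i.e., all Hasse derivatives Q^[i,j](α,β) = 0 for i+j < s). Then for every univariate polynomial P with P(α) = β, the polynomial (X−α)^s divides Q(X, P(X)). -/
open Polynomial

/-- Evaluation of the `(a,b)`-th Hasse derivative of a bivariate polynomial
`Q ∈ F[X][Y]` (inner variable `X`, outer variable `Y`) at a point `(α, β)`. -/
noncomputable def hasseEval {F : Type*} [Field F] (Q : Polynomial (Polynomial F))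
    (a b : ℕ) (α β : F) : F :=
  (Q.hasseDeriv b).sum fun j c => (c.hasseDeriv a).eval α * β ^ j

private lemma taylor_pow_dvd {F : Type*} [Field F] (f : Polynomial F) (α : F) (n : ℕ)
    (h : ∀ k < n, ((hasseDeriv k) f).eval α = 0) : (X - C α) ^ n ∣ f := by
  have h1 : X ^ n ∣ taylor α f := by
    rw [X_pow_dvd_iff]
    intro d hd
    rw [taylor_coeff]
    exact h d hd
  have h2 := map_dvd (taylorAlgHom (-α)) h1
  simpa [taylor_taylor, taylor_X, map_pow, sub_eq_add_neg] using h2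

private lemma hasse_eval_eq {F : Type*} [Field F] (Q : Polynomial (Polynomial F))
    (a b : ℕ) (α β : F) :
    ((hasseDeriv a) (((hasseDeriv b) Q).eval (C β))).eval α = hasseEval Q a b α β := by
  set Q' := (hasseDeriv b) Q with hQ'
  have hsum : Q'.eval (C β) = ∑ k ∈ Q'.support, (β ^ k) • Q'.coeff k := by
    rw [eval_eq_sum, Polynomial.sum]
    refine Finset.sum_congr rfl fun k _ => ?_
    rw [smul_eq_C_mul, mul_comm, map_pow]
  rw [hsum, map_sum, eval_finset_sum, hasseEval, Polynomial.sum]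
  refine Finset.sum_congr rfl fun k _ => ?_
  rw [map_smul, smul_eq_C_mul, eval_mul, eval_C, mul_comm]

theorem stmt_0 {F : Type*} [Field F] (Q : Polynomial (Polynomial F)) (s : ℕ) (hs : 0 < s)
    (α β : F) (hroot : ∀ a b : ℕ, a + b < s → hasseEval Q a b α β = 0)
    (P : Polynomial F) (hP : P.eval α = β) :
    (Polynomial.X - Polynomial.C α) ^ s ∣ Q.eval P := by
  -- Taylor expansion of Q in the outer variable at C β
  have hQ : ((taylor (C β) Q).sum fun i a => C a * (X - C (C β)) ^ i) = Q :=
    sum_taylor_eq Q (C β)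
  have hdvdPβ : (X - C α) ∣ (P - C β) := by
    rw [dvd_iff_isRoot]
    simp [hP]
  have key : ∀ b : ℕ, (X - C α) ^ s ∣ (taylor (C β) Q).coeff b * (P - C β) ^ b := by
    intro b
    rcases le_or_gt s b with hb | hb
    · exact dvd_mul_of_dvd_right
        ((pow_dvd_pow _ hb).trans (pow_dvd_pow_of_dvd hdvdPβ b)) _
    · have h1 : (X - C α) ^ (s - b) ∣ (taylor (C β) Q).coeff b := by
        rw [taylor_coeff]
        apply taylor_pow_dvd
        intro k hk
        rw [hasse_eval_eq]
        exact hroot k b (by omega)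
      have h2 : (X - C α) ^ b ∣ (P - C β) ^ b := pow_dvd_pow_of_dvd hdvdPβ b
      have := mul_dvd_mul h1 h2
      rwa [← pow_add, Nat.sub_add_cancel hb.le] at this
  calc (X - C α) ^ s ∣ ((taylor (C β) Q).sum fun i a => a * (P - C β) ^ i) := by
        rw [Polynomial.sum]
        exact Finset.dvd_sum fun b _ => key b
    _ = Q.eval P := by
        conv_rhs => rw [← hQ, Polynomial.sum, eval_finset_sum]
        rw [Polynomial.sum]
        refine Finset.sum_congr rfl fun i _ => ?_
        simp
end

section
/- Let α₁,…,αₙ be distinct elements of F, y₁,…,yₙ ∈ F, and let L(X) be the Lagrange interpolation polynomial with L(αᵢ) = yᵢ for all i. A bivariate polynomial Q(X,Y) has each point (αᵢ, yᵢ) as a root of multiplicity at least s if and only if for every b ∈ {0,…,s−1}, the polynomial ∏_{i=1}^n (X − αᵢ)^{s−b} divides Q^[b](X, L(X)), where Q^[b] denotes the b-th Hasse derivative of Q with respect to Y. -/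
open Polynomial

/-- `(α, β)` is a root of `Q` of multiplicity at least `s`. -/
def rootMultAtLeast {F : Type*} [Field F] (Q : Polynomial (Polynomial F))
    (s : ℕ) (α β : F) : Prop :=
  ∀ a b : ℕ, a + b < s → hasseEval Q a b α β = 0

/- ### Auxiliary lemmas -/

lemma aux_taylor_pow {R : Type*} [CommSemiring R] (r : R) (p : R[X]) (m : ℕ) :
    Polynomial.taylor r (p ^ m) = (Polynomial.taylor r p) ^ m := by
  induction m with
  | zero => simpa using Polynomial.taylor_one r
  | succ k ih => rw [pow_succ, Polynomial.taylor_mul, ih, pow_succ]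

lemma aux_taylor_X_sub_C {R : Type*} [CommRing R] (r : R) :
    Polynomial.taylor r (X - C r) = X := by
  rw [map_sub, Polynomial.taylor_X, Polynomial.taylor_C]
  ring

lemma aux_taylor_hasseDeriv {R : Type*} [CommSemiring R] (r : R) (f : R[X]) (b : ℕ) :
    Polynomial.taylor r (Polynomial.hasseDeriv b f)
      = Polynomial.hasseDeriv b (Polynomial.taylor r f) := by
  ext c
  rw [Polynomial.taylor_coeff, Polynomial.hasseDeriv_coeff, Polynomial.taylor_coeff]
  have h := LinearMap.congr_fun (Polynomial.hasseDeriv_comp (R := R) c b) f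
  simp only [LinearMap.comp_apply, LinearMap.smul_apply] at h
  rw [h, nsmul_eq_mul, Polynomial.eval_mul, Polynomial.eval_natCast, Nat.choose_symm_add]

/-- `(X - C α)^m ∣ p` iff the first `m` Taylor coefficients at `α` vanish. -/
lemma aux_pow_dvd_iff {F : Type*} [Field F] (α : F) (p : F[X]) (m : ℕ) :
    (X - C α) ^ m ∣ p ↔ ∀ a < m, (Polynomial.taylor α p).coeff a = 0 := by
  rw [← Polynomial.X_pow_dvd_iff]
  constructor
  · rintro ⟨q, rfl⟩
    exact ⟨Polynomial.taylor α q, by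
      rw [Polynomial.taylor_mul, aux_taylor_pow, aux_taylor_X_sub_C]⟩
  · rintro ⟨q, hq⟩
    refine ⟨Polynomial.taylor (-α) q, ?_⟩
    have h := congrArg (Polynomial.taylor (-α)) hq
    rw [Polynomial.taylor_taylor, neg_add_cancel, Polynomial.taylor_zero,
      Polynomial.taylor_mul, aux_taylor_pow, Polynomial.taylor_X] at h
    rw [Polynomial.C_neg] at h
    rw [h]
    ring

/-- `hasseEval` as an iterated Taylor coefficient. -/
lemma aux_hasseEval_eq {F : Type*} [Field F] (Q : Polynomial (Polynomial F))
    (a b : ℕ) (α β : F) :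
    hasseEval Q a b α β
      = (Polynomial.taylor α ((Polynomial.taylor (C β) Q).coeff b)).coeff a := by
  have h : Polynomial.eval (C β) (Q.hasseDeriv b)
      = ∑ j ∈ (Q.hasseDeriv b).support, β ^ j • (Q.hasseDeriv b).coeff j := by
    rw [Polynomial.eval_eq_sum, Polynomial.sum_def]
    refine Finset.sum_congr rfl fun j _ => ?_
    rw [Polynomial.smul_eq_C_mul, Polynomial.C_pow]
    ring
  unfold hasseEval
  rw [Polynomial.taylor_coeff, Polynomial.taylor_coeff, h, map_sum,
    Polynomial.eval_finset_sum, Polynomial.sum_def]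
  refine Finset.sum_congr rfl fun j _ => ?_
  rw [map_smul, Polynomial.eval_smul, smul_eq_mul, mul_comm]

/-- Divisibility of a single term `g * D^e`. -/
lemma aux_term_dvd {F : Type*} [Field F] {α : F} {D : F[X]} (hD : (X - C α) ∣ D)
    {s : ℕ} (b e : ℕ) (g : F[X]) (hg : b + e < s → (X - C α) ^ (s - (b + e)) ∣ g) :
    (X - C α) ^ (s - b) ∣ g * D ^ e := by
  by_cases h : b + e < s
  · have h1 := hg h
    have h2 : (X - C α) ^ e ∣ D ^ e := pow_dvd_pow_of_dvd hD e
    have h3 : (X - C α) ^ (s - b) = (X - C α) ^ (s - (b + e)) * (X - C α) ^ e := by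
      rw [← pow_add]; congr 1; omega
    rw [h3]
    exact mul_dvd_mul h1 h2
  · exact ((pow_dvd_pow_of_dvd hD (s - b)).trans (pow_dvd_pow D (by omega))).mul_left g

/-- The key equivalence between vanishing of shifted coefficients and divisibility
after substituting `Y := D`. -/
lemma aux_key_equiv {F : Type*} [Field F] (α : F) (D : F[X]) (hD : (X - C α) ∣ D)
    (S : Polynomial (Polynomial F)) (s : ℕ) :
    (∀ b < s, (X - C α) ^ (s - b) ∣ S.coeff b) ↔
      (∀ b < s, (X - C α) ^ (s - b) ∣ (S.hasseDeriv b).eval D) := by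
  constructor
  · intro H b hb
    rw [Polynomial.eval_eq_sum, Polynomial.sum_def]
    refine Finset.dvd_sum fun c _ => ?_
    rw [Polynomial.hasseDeriv_coeff]
    refine aux_term_dvd hD b c _ fun h => ?_
    have := H (c + b) (by omega)
    have h2 : s - (b + c) = s - (c + b) := by omega
    rw [h2]
    exact this.mul_left _
  · intro H
    have key : ∀ t b, b < s → s ≤ b + t → (X - C α) ^ (s - b) ∣ S.coeff b := by
      intro t
      induction t with
      | zero => intro b hb hbt; omega
      | succ k ih =>
        intro b hb hbt
        set p := S.hasseDeriv b with hp
        have hp0 : p.coeff 0 = S.coeff b := by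
          rw [hp, Polynomial.hasseDeriv_coeff]; simp
        have hev : p.eval D = D * (p.divX.eval D) + p.coeff 0 := by
          conv_lhs => rw [← Polynomial.X_mul_divX_add p]
          simp only [Polynomial.eval_add, Polynomial.eval_mul, Polynomial.eval_X,
            Polynomial.eval_C]
        have hdec : S.coeff b = p.eval D - D * (p.divX.eval D) := by
          rw [← hp0, hev]
          ring
        rw [hdec]
        refine dvd_sub (H b hb) ?_
        rw [Polynomial.eval_eq_sum, Polynomial.sum_def, Finset.mul_sum]
        refine Finset.dvd_sum fun c _ => ?_
        rw [Polynomial.coeff_divX, Polynomial.hasseDeriv_coeff]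
        have hrw : D * (((c + 1 + b).choose b : F[X]) * S.coeff (c + 1 + b) * D ^ c)
            = (((c + 1 + b).choose b : F[X]) * S.coeff (c + 1 + b)) * D ^ (c + 1) := by
          ring
        rw [hrw]
        refine aux_term_dvd hD b (c + 1) _ fun h => ?_
        have h1 : (X - C α) ^ (s - (c + 1 + b)) ∣ S.coeff (c + 1 + b) :=
          ih (c + 1 + b) (by omega) (by omega)
        have h2 : s - (b + (c + 1)) = s - (c + 1 + b) := by omega
        rw [h2]
        exact h1.mul_left _
    exact fun b hb => key s b hb (by omega)

/-- Substitution `Y := L` in a Hasse derivative, rewritten through the Taylor shift. -/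
lemma aux_eval_shift {F : Type*} [Field F] (β : F) (L : F[X])
    (Q : Polynomial (Polynomial F)) (b : ℕ) :
    (Q.hasseDeriv b).eval L
      = ((Polynomial.taylor (C β) Q).hasseDeriv b).eval (L - C β) := by
  rw [← aux_taylor_hasseDeriv, Polynomial.taylor_eval_sub]

theorem stmt_1 {F : Type*} [Field F] {n : ℕ} (α : Fin n → F) (hα : Function.Injective α)
    (y : Fin n → F) (s : ℕ) (hs : 0 < s) (Q : Polynomial (Polynomial F)) :
    (∀ i, rootMultAtLeast Q s (α i) (y i)) ↔
      ∀ b < s, (∏ i : Fin n, (Polynomial.X - Polynomial.C (α i)) ^ (s - b)) ∣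
        (Q.hasseDeriv b).eval (Lagrange.interpolate Finset.univ α y) := by
  set L := Lagrange.interpolate Finset.univ α y with hLdef
  have hLi : ∀ i, L.eval (α i) = y i := fun i =>
    Lagrange.eval_interpolate_at_node y (Set.injOn_of_injective hα) (Finset.mem_univ i)
  have main : ∀ i, rootMultAtLeast Q s (α i) (y i) ↔
      ∀ b < s, (X - C (α i)) ^ (s - b) ∣ (Q.hasseDeriv b).eval L := by
    intro i
    set S := Polynomial.taylor (C (y i)) Q with hS
    have hD : (X - C (α i)) ∣ (L - C (y i)) := by
      rw [Polynomial.dvd_iff_isRoot]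
      simp [Polynomial.IsRoot, hLi i]
    have h1 : rootMultAtLeast Q s (α i) (y i) ↔
        ∀ b < s, (X - C (α i)) ^ (s - b) ∣ S.coeff b := by
      constructor
      · intro H b hb
        rw [aux_pow_dvd_iff]
        intro a ha
        rw [← aux_hasseEval_eq]
        exact H a b (by omega)
      · intro H a b hab
        rw [aux_hasseEval_eq]
        exact (aux_pow_dvd_iff _ _ _).mp (H b (by omega)) a (by omega)
    rw [h1, aux_key_equiv (α i) (L - C (y i)) hD S s]
    refine forall₂_congr fun b hb => ?_
    rw [aux_eval_shift (y i) L Q b]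
  constructor
  · intro H b hb
    refine Finset.prod_dvd_of_coprime ?_ fun i _ => (main i).mp (H i) b hb
    intro i _ j _ hij
    exact (Polynomial.pairwise_coprime_X_sub_C hα hij).pow
  · intro H i
    rw [main i]
    intro b hb
    exact dvd_trans
      (Finset.dvd_prod_of_mem (fun j => (X - C (α j)) ^ (s - b)) (Finset.mem_univ i)) (H b hb)
end

section
/- Let α₁,…,αₙ be distinct elements of F, let r_{k+1},…,rₙ ∈ F, let L_{n−k}(X) be a polynomial, and set the point sets P_{n−k} = {(αᵢ, L_{n−k}(αᵢ)) : k+1 ≤ i ≤ n} and Pₙ = {(α₁,0),…,(α_k,0)} ∪ {(αᵢ, L_{n−k}(αᵢ)·∏_{j=1}^k(αᵢ−α_j)) : k+1 ≤ i ≤ n}. Let R(X,Y) = Σ_{j=0}^d Rⱼ(X) Yʲ be a bivariate polynomial and s a positive integer with s ≥ d = deg_Y R. Then R has each point of P_{n−k} as a root of multiplicity at least s if and only if Q(X,Y) = Σ_{j=0}^d Rⱼ(X) (∏_{i=1}^k (X−αᵢ))^{s−j} Yʲ has each point of Pₙ as a root of multiplicity at least s. -/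
open Polynomial

section Aux
variable {F : Type*} [Field F]

/-- Taylor shift as a ring hom. -/
noncomputable def tl (A : F) : Polynomial F →+* Polynomial F := eval₂RingHom C (X + C A)

lemma tl_apply (A : F) (f : Polynomial F) : tl A f = taylor A f := by
  simp [tl, taylor_apply, Polynomial.comp]

/-- The bivariate shift `(X,Y) ↦ (X+A, Y+β)` as a ring hom on `F[X][Y]`. -/
noncomputable def shiftHom (A β : F) :
    Polynomial (Polynomial F) →+* Polynomial (Polynomial F) :=
  eval₂RingHom ((C : Polynomial F →+* Polynomial (Polynomial F)).comp (tl A)) (X + C (C β))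

@[simp] lemma shiftHom_C (A β : F) (f : Polynomial F) :
    shiftHom A β (C f) = C (tl A f) := eval₂_C _ _

@[simp] lemma shiftHom_X (A β : F) :
    shiftHom A β (X : Polynomial (Polynomial F)) = X + C (C β) := eval₂_X _ _

lemma hasseEval_eq_coeff (P : Polynomial (Polynomial F)) (a b : ℕ) (A β : F) :
    hasseEval P a b A β = ((shiftHom A β P).coeff b).coeff a := by
  induction P using Polynomial.induction_on' with
  | add p q hp hq =>
      have : hasseEval (p + q) a b A β = hasseEval p a b A β + hasseEval q a b A β := by
        unfold hasseEval
        rw [map_add]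
        exact Polynomial.sum_add_index _ _ _ (fun j => by simp)
          (fun j c d => by rw [map_add, eval_add, add_mul])
      rw [this, hp, hq, map_add, coeff_add, coeff_add]
  | monomial n c =>
      have hR : (((shiftHom A β) ((monomial n c : Polynomial (Polynomial F)))).coeff b).coeff a
          = (n.choose b : F) * ((hasseDeriv a c).eval A * β ^ (n - b)) := by
        rw [← C_mul_X_pow_eq_monomial, map_mul, map_pow, shiftHom_C, shiftHom_X,
          coeff_C_mul, coeff_X_add_C_pow]
        have h2 : (C β : Polynomial F) ^ (n - b) * ((n.choose b : Polynomial F)) =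
            C (β ^ (n - b) * (n.choose b : F)) := by
          rw [← C_pow, ← map_natCast (C : F →+* Polynomial F), ← C_mul]
        rw [h2, coeff_mul_C, tl_apply, taylor_coeff]
        ring
      rw [hR]
      unfold hasseEval
      rw [hasseDeriv_monomial, Polynomial.sum_monomial_index _ _ (by simp)]
      have h1 : ((n.choose b : Polynomial F) * c).hasseDeriv a
          = (n.choose b : Polynomial F) * c.hasseDeriv a := by
        rw [← nsmul_eq_mul, ← nsmul_eq_mul, map_nsmul]
      rw [h1, eval_mul, eval_natCast]
      ring

def LowZero (s : ℕ) (P : Polynomial (Polynomial F)) : Prop :=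
  ∀ a b : ℕ, a + b < s → (P.coeff b).coeff a = 0

lemma rootMult_iff_lowZero (P : Polynomial (Polynomial F)) (s : ℕ) (A β : F) :
    rootMultAtLeast P s A β ↔ LowZero s (shiftHom A β P) := by
  unfold rootMultAtLeast LowZero
  refine forall_congr' fun a => forall_congr' fun b => imp_congr Iff.rfl ?_
  rw [hasseEval_eq_coeff]

lemma conv0 (f g : Polynomial F) (a : ℕ)
    (h : ∀ i j, i + j = a → f.coeff i * g.coeff j = 0) : (f * g).coeff a = 0 := by
  rw [coeff_mul]
  exact Finset.sum_eq_zero fun x hx => h x.1 x.2 (Finset.HasAntidiagonal.mem_antidiagonal.mp hx)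

lemma lowCancel (g f : Polynomial F) (hg : g.coeff 0 ≠ 0) (m : ℕ)
    (h : ∀ a < m, (g * f).coeff a = 0) : ∀ a < m, f.coeff a = 0 := by
  intro a
  induction a using Nat.strong_induction_on with
  | _ a ih =>
    intro ham
    have h0 := h a ham
    rw [coeff_mul] at h0
    have hsum : ∑ x ∈ Finset.HasAntidiagonal.antidiagonal a, g.coeff x.1 * f.coeff x.2
        = g.coeff 0 * f.coeff a := by
      refine Finset.sum_eq_single (0, a) ?_ ?_
      · rintro ⟨i, j⟩ hx hne
        have hij : i + j = a := Finset.HasAntidiagonal.mem_antidiagonal.mp hx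
        have hi : i ≠ 0 := by
          rintro rfl
          simp at hij
          exact hne (by simp [hij])
        have hj : j < a := by omega
        rw [ih j hj (lt_trans hj ham), mul_zero]
      · intro hx
        exact absurd (by simp) hx
    rw [hsum] at h0
    exact (mul_eq_zero.mp h0).resolve_left hg

lemma lowZero_C_mul (s : ℕ) (g : Polynomial F) (P : Polynomial (Polynomial F))
    (h : LowZero s P) : LowZero s (C g * P) := by
  intro a b hab
  rw [coeff_C_mul]
  refine conv0 _ _ _ fun i j hij => ?_
  rw [h j b (by omega), mul_zero]

lemma lowZero_of_C_mul (s : ℕ) (g : Polynomial F) (hg : g.coeff 0 ≠ 0)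
    (P : Polynomial (Polynomial F)) (h : LowZero s (C g * P)) : LowZero s P := by
  intro a b hab
  refine lowCancel g (P.coeff b) hg (s - b) (fun a' ha' => ?_) a (by omega)
  have := h a' b (by omega)
  rwa [coeff_C_mul] at this

lemma comp_C_mul_X_coeff (P : Polynomial (Polynomial F)) (g : Polynomial F) (b : ℕ) :
    (P.comp (C g * X)).coeff b = g ^ b * P.coeff b := by
  induction P using Polynomial.induction_on' with
  | add p q hp hq => rw [add_comp, coeff_add, hp, hq, coeff_add, mul_add]
  | monomial n c =>
      rw [← C_mul_X_pow_eq_monomial, mul_comp, pow_comp, C_comp, X_comp, mul_pow,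
        ← C_pow, coeff_C_mul, coeff_C_mul, coeff_C_mul, coeff_X_pow]
      by_cases hnb : b = n
      · subst hnb; simp [mul_comm]
      · simp [Ne.symm hnb, hnb]

lemma lowZero_comp_C_mul_X (s : ℕ) (g : Polynomial F) (P : Polynomial (Polynomial F))
    (h : LowZero s P) : LowZero s (P.comp (C g * X)) := by
  intro a b hab
  rw [_root_.comp_C_mul_X_coeff]
  refine conv0 _ _ _ fun i j hij => ?_
  rw [h j b (by omega), mul_zero]

lemma lowZero_of_comp_C_mul_X (s : ℕ) (g : Polynomial F) (hg : g.coeff 0 ≠ 0)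
    (P : Polynomial (Polynomial F)) (h : LowZero s (P.comp (C g * X))) : LowZero s P := by
  intro a b hab
  have hg' : (g ^ b).coeff 0 ≠ 0 := by
    rw [coeff_zero_eq_eval_zero, eval_pow, ← coeff_zero_eq_eval_zero]
    exact pow_ne_zero _ hg
  refine lowCancel (g ^ b) (P.coeff b) hg' (s - b) (fun a' ha' => ?_) a (by omega)
  have := h a' b (by omega)
  rwa [_root_.comp_C_mul_X_coeff] at this

lemma lowZero_taylor (s : ℕ) (c : Polynomial F) (hc : c.coeff 0 = 0)
    (P : Polynomial (Polynomial F)) (h : LowZero s P) : LowZero s (taylor c P) := by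
  intro a b hab
  rw [taylor_coeff, eval_eq_sum_range, finset_sum_coeff]
  refine Finset.sum_eq_zero fun j hj => ?_
  refine conv0 _ _ _ fun i i' hii' => ?_
  by_cases hi' : i' < j
  · have hXdvd : (X : Polynomial F) ^ j ∣ c ^ j :=
      pow_dvd_pow_of_dvd (X_dvd_iff.mpr hc) j
    rw [X_pow_dvd_iff.mp hXdvd i' hi', mul_zero]
  · have : (hasseDeriv b P).coeff j = ((j + b).choose b : Polynomial F) * P.coeff (j + b) :=
      hasseDeriv_coeff b P j
    rw [this, ← map_natCast (C : F →+* Polynomial F), coeff_C_mul,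
      h i (j + b) (by omega), mul_zero, zero_mul]

lemma key_identity (s N : ℕ) (r : ℕ → Polynomial F) (p : Polynomial F) (β γ : F)
    (hjs : ∀ j ∈ Finset.range N, j ≤ s) :
    (∑ j ∈ Finset.range N, C (r j * p ^ (s - j)) * (X + C (C (β * γ))) ^ j).comp
        (C p * X + C (C β * (p - C γ)))
      = C (p ^ s) * ∑ j ∈ Finset.range N, C (r j) * (X + C (C β)) ^ j := by
  have hW : C p * X + C (C β * (p - C γ)) + C (C (β * γ))
      = C p * (X + C (C β)) := by
    have h1 : C β * (p - C γ) + C (β * γ) = p * C β := by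
      rw [C_mul]; ring
    rw [add_assoc, ← C_add, h1, mul_add, ← C_mul]
  rw [Finset.mul_sum, Polynomial.sum_comp]
  refine Finset.sum_congr rfl fun j hj => ?_
  rw [mul_comp, pow_comp, add_comp, X_comp, C_comp, C_comp, hW, mul_pow, ← C_pow,
    ← pow_sub_mul_pow p (hjs j hj)]
  rw [C_mul, C_mul]
  ring

lemma main_iff (s N : ℕ) (r : ℕ → Polynomial F) (p : Polynomial F) (β γ : F)
    (hp0 : p.coeff 0 = γ) (hγ : γ ≠ 0) (hjs : ∀ j ∈ Finset.range N, j ≤ s) :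
    LowZero s (∑ j ∈ Finset.range N, C (r j) * (X + C (C β)) ^ j) ↔
      LowZero s (∑ j ∈ Finset.range N, C (r j * p ^ (s - j)) * (X + C (C (β * γ))) ^ j) := by
  set SR := ∑ j ∈ Finset.range N, C (r j) * (X + C (C β)) ^ j with hSR
  set SQ := ∑ j ∈ Finset.range N, C (r j * p ^ (s - j)) * (X + C (C (β * γ))) ^ j with hSQ
  set cc := C β * (p - C γ) with hcc
  have hcc0 : cc.coeff 0 = 0 := by
    rw [hcc, mul_coeff_zero, coeff_sub, coeff_C, coeff_C, hp0]
    simp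
  have hdec : SQ.comp (C p * X + C cc) = (taylor cc SQ).comp (C p * X) := by
    rw [taylor_apply, comp_assoc, add_comp, X_comp, C_comp]
  have hid : (taylor cc SQ).comp (C p * X) = C (p ^ s) * SR := by
    rw [← hdec, hcc, key_identity s N r p β γ hjs]
  have hps : (p ^ s).coeff 0 ≠ 0 := by
    rw [coeff_zero_eq_eval_zero, eval_pow, ← coeff_zero_eq_eval_zero, hp0]
    exact pow_ne_zero _ hγ
  have hpc : p.coeff 0 ≠ 0 := by rw [hp0]; exact hγ
  constructor
  · intro h
    have h1 : LowZero s (C (p ^ s) * SR) := lowZero_C_mul s _ _ h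
    rw [← hid] at h1
    have h2 : LowZero s (taylor cc SQ) := lowZero_of_comp_C_mul_X s p hpc _ h1
    have h3 : LowZero s (taylor (-cc) (taylor cc SQ)) :=
      lowZero_taylor s (-cc) (by simp [hcc0]) _ h2
    rwa [taylor_taylor, neg_add_cancel, taylor_zero', LinearMap.id_apply] at h3
  · intro h
    have h1 : LowZero s (taylor cc SQ) := lowZero_taylor s cc hcc0 _ h
    have h2 : LowZero s ((taylor cc SQ).comp (C p * X)) := lowZero_comp_C_mul_X s p _ h1
    rw [hid] at h2
    exact lowZero_of_C_mul s _ hps _ h2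

lemma shift_expand (A β' : F) (P : Polynomial (Polynomial F)) :
    shiftHom A β' P = ∑ j ∈ Finset.range (P.natDegree + 1),
      C (tl A (P.coeff j)) * (X + C (C β')) ^ j := by
  conv_lhs => rw [P.as_sum_range' (P.natDegree + 1) (by omega)]
  rw [map_sum]
  refine Finset.sum_congr rfl fun j hj => ?_
  rw [← C_mul_X_pow_eq_monomial, map_mul, map_pow, shiftHom_C, shiftHom_X]

lemma lowZero_sum_Xpow (s N : ℕ) (r : ℕ → Polynomial F) (p : Polynomial F)
    (hp : p.coeff 0 = 0) :
    LowZero s (∑ j ∈ Finset.range N, C (r j * p ^ (s - j)) * X ^ j) := by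
  intro a b hab
  rw [finset_sum_coeff, finset_sum_coeff]
  refine Finset.sum_eq_zero fun j hj => ?_
  rw [coeff_C_mul, coeff_X_pow]
  by_cases hbj : b = j
  · subst hbj
    rw [if_pos rfl, mul_one]
    refine conv0 _ _ _ fun i i' hii' => ?_
    have hz : (p ^ (s - b)).coeff i' = 0 :=
      X_pow_dvd_iff.mp (pow_dvd_pow_of_dvd (X_dvd_iff.mpr hp) _) i' (by omega)
    rw [hz, mul_zero]
  · rw [if_neg hbj, mul_zero, coeff_zero]

end Aux

theorem stmt_4 {F : Type*} [Field F] {n k : ℕ} (hk1 : 1 ≤ k) (hkn : k < n)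
    (α : Fin n → F) (hα : Function.Injective α)
    (L : Polynomial F)  -- the polynomial `L_{n-k}` giving the values at the last points
    (R : Polynomial (Polynomial F)) (s : ℕ) (hs : 0 < s) (hdeg : R.natDegree ≤ s)
    (pk : Polynomial F)
    (hpk : pk = ∏ i ∈ Finset.univ.filter (fun i : Fin n => (i : ℕ) < k),
      (Polynomial.X - Polynomial.C (α i)))
    (Q : Polynomial (Polynomial F))
    (hQ : Q = ∑ j ∈ Finset.range (R.natDegree + 1),
      Polynomial.C (R.coeff j * pk ^ (s - j)) * Polynomial.X ^ j) :
    (∀ i : Fin n, k ≤ (i : ℕ) → rootMultAtLeast R s (α i) (L.eval (α i))) ↔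
      ((∀ i : Fin n, (i : ℕ) < k → rootMultAtLeast Q s (α i) 0) ∧
        ∀ i : Fin n, k ≤ (i : ℕ) →
          rootMultAtLeast Q s (α i) (L.eval (α i) * pk.eval (α i))) := by
  have htl0 : ∀ (A : F), (tl A pk).coeff 0 = pk.eval A := by
    intro A; rw [tl_apply, taylor_coeff_zero]
  have hexpQ : ∀ (A β' : F), shiftHom A β' Q
      = ∑ j ∈ Finset.range (R.natDegree + 1),
          C (tl A (R.coeff j) * (tl A pk) ^ (s - j)) * (X + C (C β')) ^ j := by
    intro A β'
    rw [hQ, map_sum]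
    refine Finset.sum_congr rfl fun j hj => ?_
    rw [map_mul, map_pow, shiftHom_C, shiftHom_X, map_mul, map_pow]
  have hlow : ∀ i : Fin n, (i : ℕ) < k → rootMultAtLeast Q s (α i) 0 := by
    intro i hi
    rw [rootMult_iff_lowZero, hexpQ]
    have hz : pk.eval (α i) = 0 := by
      rw [hpk, eval_prod]
      refine Finset.prod_eq_zero (Finset.mem_filter.mpr ⟨Finset.mem_univ i, hi⟩) ?_
      simp
    have hX : (X + C (C (0:F))) = (X : Polynomial (Polynomial F)) := by simp
    rw [hX]
    exact lowZero_sum_Xpow s _ _ _ (by rw [htl0, hz])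
  have hmain : ∀ i : Fin n, k ≤ (i : ℕ) →
      (rootMultAtLeast R s (α i) (L.eval (α i)) ↔
        rootMultAtLeast Q s (α i) (L.eval (α i) * pk.eval (α i))) := by
    intro i hi
    have hγ : pk.eval (α i) ≠ 0 := by
      rw [hpk, eval_prod]
      refine Finset.prod_ne_zero_iff.mpr fun j hj => ?_
      have hj' : (j : ℕ) < k := (Finset.mem_filter.mp hj).2
      simp only [eval_sub, eval_X, eval_C]
      refine sub_ne_zero.mpr fun h => ?_
      have hij : (i : ℕ) = (j : ℕ) := by rw [hα h]
      omega
    rw [rootMult_iff_lowZero, rootMult_iff_lowZero, hexpQ, shift_expand]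
    exact main_iff s (R.natDegree + 1) (fun j => tl (α i) (R.coeff j)) (tl (α i) pk)
      (L.eval (α i)) (pk.eval (α i)) (htl0 _) hγ
      (fun j hj => by have := Finset.mem_range.mp hj; omega)
  constructor
  · intro h
    exact ⟨hlow, fun i hi => (hmain i hi).mp (h i hi)⟩
  · intro h i hi
    exact (hmain i hi).mpr (h.2 i hi)
end

section
/- Let α₁,…,αₙ be distinct points of F, k ≤ n, and t = ⌊(n−k)/2⌋. For any y ∈ Fⁿ there exists a nonzero bivariate polynomial Q(X,Y) = Q₀(X) + Y·Q₁(X) with deg Q₀ ≤ n−t−1, deg Q₁ ≤ n−t−k, and Q(αᵢ, yᵢ) = 0 for all i = 1,…,n. -/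
open Polynomial

theorem stmt_6 {F : Type*} [Field F] {n k : ℕ} (hk1 : 1 ≤ k) (hkn : k ≤ n)
    (α : Fin n → F) (hα : Function.Injective α) (y : Fin n → F) :
    ∃ Q₀ Q₁ : Polynomial F,
      ¬(Q₀ = 0 ∧ Q₁ = 0) ∧
      Q₀.natDegree ≤ n - (n - k) / 2 - 1 ∧
      Q₁.natDegree ≤ n - (n - k) / 2 - k ∧
      ∀ i : Fin n, Q₀.eval (α i) + y i * Q₁.eval (α i) = 0 := by
  set t : ℕ := (n - k) / 2 with ht
  set a : ℕ := n - t with ha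
  set b : ℕ := n - t - k + 1 with hb
  have hdiv : t * 2 ≤ n - k := Nat.div_mul_le_self _ _
  have hdim : n < a + b := by omega
  -- the evaluation linear map
  let L : (degreeLT F a × degreeLT F b) →ₗ[F] (Fin n → F) :=
    LinearMap.pi fun i =>
      ((Polynomial.leval (α i)).comp ((Submodule.subtype _).comp (LinearMap.fst F _ _))) +
      (y i) • ((Polynomial.leval (α i)).comp ((Submodule.subtype _).comp (LinearMap.snd F _ _)))
  have hfd1 : Module.Finite F (degreeLT F a) :=
    Module.Finite.equiv (degreeLTEquiv F a).symm
  have hfd2 : Module.Finite F (degreeLT F b) :=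
    Module.Finite.equiv (degreeLTEquiv F b).symm
  have hnotinj : ¬ Function.Injective L := by
    intro hinj
    have := LinearMap.finrank_le_finrank_of_injective hinj
    rw [Module.finrank_prod, (degreeLTEquiv F a).finrank_eq,
      (degreeLTEquiv F b).finrank_eq, Module.finrank_fin_fun,
      Module.finrank_fin_fun, Module.finrank_fin_fun] at this
    omega
  rw [injective_iff_map_eq_zero] at hnotinj
  push_neg at hnotinj
  obtain ⟨p, hp0, hpne⟩ := hnotinj
  refine ⟨(p.1 : F[X]), (p.2 : F[X]), ?_, ?_, ?_, ?_⟩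
  · rintro ⟨h1, h2⟩
    exact hpne (Prod.ext (Subtype.ext h1) (Subtype.ext h2))
  · rcases eq_or_ne (p.1 : F[X]) 0 with h | h
    · simp [h]
    · have := Polynomial.mem_degreeLT.mp p.1.2
      have := (Polynomial.natDegree_lt_iff_degree_lt h).mpr this
      omega
  · rcases eq_or_ne (p.2 : F[X]) 0 with h | h
    · simp [h]
    · have := Polynomial.mem_degreeLT.mp p.2.2
      have := (Polynomial.natDegree_lt_iff_degree_lt h).mpr this
      have hbn : (p.2 : F[X]).natDegree < b := this
      omega
  · intro i
    have := congrFun hp0 i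
    simpa [L, Polynomial.leval] using this
end

section
/- (Correctness of Welch–Berlekamp) Let α₁,…,αₙ be distinct, k ≤ n, t = ⌊(n−k)/2⌋, P ∈ F[X] with deg P < k, and y ∈ Fⁿ such that |{i : yᵢ ≠ P(αᵢ)}| ≤ t. If Q(X,Y) = Q₀(X) + Y·Q₁(X) is nonzero with deg Q₀ ≤ n−t−1, deg Q₁ ≤ n−t−k, and Q(αᵢ, yᵢ) = 0 for all i, then Q(X, P(X)) = 0, i.e., Q₀(X) + P(X)Q₁(X) = 0. -/
open Polynomial Classical

noncomputable section
open scoped Classical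

theorem stmt_7 {F : Type*} [Field F] {n k : ℕ} (hk1 : 1 ≤ k) (hkn : k ≤ n)
    (α : Fin n → F) (hα : Function.Injective α)
    (P : Polynomial F) (hP : P.degree < (k : ℕ))
    (y : Fin n → F)
    (herr : (Finset.univ.filter fun i : Fin n => y i ≠ P.eval (α i)).card ≤ (n - k) / 2)
    (Q₀ Q₁ : Polynomial F) (hne : ¬(Q₀ = 0 ∧ Q₁ = 0))
    (hd0 : Q₀.natDegree ≤ n - (n - k) / 2 - 1)
    (hd1 : Q₁.natDegree ≤ n - (n - k) / 2 - k)
    (hint : ∀ i : Fin n, Q₀.eval (α i) + y i * Q₁.eval (α i) = 0) :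
    Q₀ + P * Q₁ = 0 := by
  set t : ℕ := (n - k) / 2 with ht
  -- set of agreement indices
  set S : Finset (Fin n) := Finset.univ.filter fun i => y i = P.eval (α i) with hS
  have hScard : n - t ≤ S.card := by
    have := Finset.card_filter_add_card_filter_not
      (s := (Finset.univ : Finset (Fin n))) (p := fun i => y i = P.eval (α i))
    simp only [Finset.card_univ, Fintype.card_fin, ne_eq] at this herr ⊢
    rw [hS]
    omega
  -- degree bound on P
  have hPdeg : P.natDegree ≤ k - 1 := by
    rcases eq_or_ne P 0 with rfl | hP0
    · simp
    · have := (natDegree_lt_iff_degree_lt hP0).mpr hP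
      omega
  have htk : t ≤ n - k := Nat.div_le_self _ _
  -- degree bound on R := Q₀ + P * Q₁
  have hRdeg : (Q₀ + P * Q₁).natDegree ≤ n - t - 1 := by
    refine le_trans (natDegree_add_le _ _) (max_le hd0 ?_)
    refine le_trans (natDegree_mul_le) ?_
    omega
  -- R vanishes on image of S
  have hroots : ∀ x ∈ S.image α, (Q₀ + P * Q₁).eval x = 0 := by
    intro x hx
    obtain ⟨i, hi, rfl⟩ := Finset.mem_image.mp hx
    have hy : y i = P.eval (α i) := (Finset.mem_filter.mp hi).2
    have := hint i
    rw [hy] at this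
    simp only [eval_add, eval_mul]
    exact this
  have hcard : (Q₀ + P * Q₁).natDegree < (S.image α).card := by
    rw [Finset.card_image_of_injective _ hα]
    omega
  exact eq_zero_of_natDegree_lt_card_of_eval_eq_zero' _ _ hroots hcard
end
end

section
/- (Uniqueness of decoding via Welch–Berlekamp) Under the hypotheses of the correctness statement, additionally Q₁ ≠ 0, and hence P(X) = −Q₀(X)/Q₁(X); in particular P is uniquely determined by any nonzero solution Q of the interpolation problem. -/
open Polynomial

noncomputable section
open scoped Classical

theorem stmt_8 {F : Type*} [Field F] {n k : ℕ} (hk1 : 1 ≤ k) (hkn : k ≤ n)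
    (α : Fin n → F) (hα : Function.Injective α)
    (P : Polynomial F) (hP : P.degree < (k : ℕ))
    (y : Fin n → F)
    (herr : (Finset.univ.filter fun i : Fin n => y i ≠ P.eval (α i)).card ≤ (n - k) / 2)
    (Q₀ Q₁ : Polynomial F) (hne : ¬(Q₀ = 0 ∧ Q₁ = 0))
    (hd0 : Q₀.natDegree ≤ n - (n - k) / 2 - 1)
    (hd1 : Q₁.natDegree ≤ n - (n - k) / 2 - k)
    (hint : ∀ i : Fin n, Q₀.eval (α i) + y i * Q₁.eval (α i) = 0) :
    Q₁ ≠ 0 ∧ P = -Q₀ / Q₁ := by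
  set t := (n - k) / 2 with ht
  have hPn : P.natDegree ≤ k - 1 := by
    by_cases hP0 : P = 0
    · simp [hP0]
    · have := (Polynomial.natDegree_lt_iff_degree_lt hP0).2 hP
      omega
  -- the key polynomial
  set R : Polynomial F := Q₀ + P * Q₁ with hR
  have hRdeg : R.natDegree ≤ n - t - 1 := by
    refine le_trans (Polynomial.natDegree_add_le _ _) ?_
    have h2 : (P * Q₁).natDegree ≤ P.natDegree + Q₁.natDegree :=
      Polynomial.natDegree_mul_le
    have hkt : k ≤ n - t := by omega
    simp only [max_le_iff]
    constructor
    · exact hd0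
    · omega
  -- good positions
  have hgood : t ≤ (Finset.univ.filter fun i : Fin n => y i = P.eval (α i)).card →
      True := fun _ => trivial
  have hcardsum :
      (Finset.univ.filter fun i : Fin n => y i = P.eval (α i)).card
        + (Finset.univ.filter fun i : Fin n => ¬ (y i = P.eval (α i))).card
      = n := by
    rw [Finset.card_filter_add_card_filter_not]
    simp
  have hgoodcard : n - t ≤ (Finset.univ.filter fun i : Fin n => y i = P.eval (α i)).card := by
    have : (Finset.univ.filter fun i : Fin n => ¬ (y i = P.eval (α i))).card ≤ t := herr
    omega
  have hR0 : R = 0 := by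
    apply Polynomial.eq_zero_of_natDegree_lt_card_of_eval_eq_zero' R
      (((Finset.univ.filter fun i : Fin n => y i = P.eval (α i))).image α)
    · intro x hx
      obtain ⟨i, hi, rfl⟩ := Finset.mem_image.1 hx
      have hyi : y i = P.eval (α i) := (Finset.mem_filter.1 hi).2
      have := hint i
      simp only [hR, Polynomial.eval_add, Polynomial.eval_mul]
      rw [hyi] at this
      linear_combination this
    · rw [Finset.card_image_of_injective _ hα]
      have hnt : 1 ≤ n - t := by omega
      omega
  have hQ0 : Q₀ = -(P * Q₁) := by
    have := hR0
    rw [hR] at this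
    linear_combination this
  have hQ1 : Q₁ ≠ 0 := by
    intro h
    exact hne ⟨by simp [hQ0, h], h⟩
  refine ⟨hQ1, ?_⟩
  rw [hQ0, neg_neg]
  exact (mul_div_cancel_right₀ P hQ1).symm
end
end

section
/- (Sudan interpolation existence) Let α₁,…,αₙ be distinct points, k, ℓ, T positive integers such that Σ_{j=0}^{ℓ} (n − T − j(k−1)) > n. Then there exists a nonzero bivariate polynomial Q(X,Y) = Σ_{j=0}^ℓ Qⱼ(X)Yʲ with deg Qⱼ ≤ n − T − 1 − j(k−1) for every j, and Q(αᵢ, yᵢ) = 0 for all i = 1,…,n, for any given y ∈ Fⁿ. -/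
open Polynomial

/-- Evaluation of a bivariate polynomial `Q ∈ F[X][Y]` at `(α, β)`. -/
noncomputable def evalBiv {F : Type*} [Field F] (Q : Polynomial (Polynomial F))
    (α β : F) : F :=
  (Q.map (Polynomial.evalRingHom α)).eval β

theorem stmt_15 {F : Type*} [Field F] {n k ℓ T : ℕ}
    (hk : 1 ≤ k) (hℓ : 1 ≤ ℓ) (hT : 1 ≤ T)
    (α : Fin n → F) (hα : Function.Injective α) (y : Fin n → F)
    (hcount : (n : ℤ) < ∑ j ∈ Finset.range (ℓ + 1), ((n : ℤ) - T - j * (k - 1))) :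
    ∃ Q : Polynomial (Polynomial F), Q ≠ 0 ∧ Q.natDegree ≤ ℓ ∧
      (∀ j i : ℕ, (Q.coeff j).coeff i ≠ 0 →
        (i : ℤ) ≤ (n : ℤ) - T - 1 - j * (k - 1)) ∧
      ∀ i, evalBiv Q (α i) (y i) = 0 := by
  classical
  set d : ℕ → ℤ := fun j => (n : ℤ) - T - j * (k - 1) with hd
  set m : ℕ → ℕ := fun j => (d j).toNat with hm
  -- counting
  have hcard : n < ∑ j ∈ Finset.range (ℓ + 1), m j := by
    have h1 : (n : ℤ) < ∑ j ∈ Finset.range (ℓ + 1), (m j : ℤ) :=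
      lt_of_lt_of_le hcount (Finset.sum_le_sum fun j _ => Int.self_le_toNat _)
    have h2 : (∑ j ∈ Finset.range (ℓ + 1), (m j : ℤ))
        = ((∑ j ∈ Finset.range (ℓ + 1), m j : ℕ) : ℤ) := by push_cast; ring
    rw [h2] at h1
    exact_mod_cast h1
  -- index type of free coefficients
  let ι := Σ j : Fin (ℓ + 1), Fin (m j)
  have hcardι : n < Fintype.card ι := by
    have : Fintype.card ι = ∑ j ∈ Finset.range (ℓ + 1), m j := by
      simp [ι, Fintype.card_sigma, Fin.sum_univ_eq_sum_range]
    omega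
  -- the linear interpolation map
  let φ : (ι → F) →ₗ[F] (Fin n → F) :=
    { toFun := fun c i => ∑ s : ι, c s * ((α i) ^ (s.2 : ℕ) * (y i) ^ (s.1 : ℕ))
      map_add' := by
        intro a b; funext i
        simp [add_mul, Finset.sum_add_distrib]
      map_smul' := by
        intro r a; funext i
        simp [Finset.mul_sum, mul_assoc] }
  -- nontrivial kernel
  have hnotinj : ¬ Function.Injective φ := by
    intro hinj
    have := LinearMap.finrank_le_finrank_of_injective hinj
    simp [Module.finrank_pi] at this
    omega
  rw [← LinearMap.ker_eq_bot] at hnotinj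
  obtain ⟨c, hcker, hc0⟩ := Submodule.exists_mem_ne_zero_of_ne_bot hnotinj
  have hφc : ∀ i, ∑ s : ι, c s * ((α i) ^ (s.2 : ℕ) * (y i) ^ (s.1 : ℕ)) = 0 := by
    intro i
    have := LinearMap.mem_ker.mp hcker
    exact congrFun this i
  -- the polynomial
  set Q : Polynomial (Polynomial F) :=
    ∑ s : ι, Polynomial.monomial (s.1 : ℕ) (Polynomial.monomial (s.2 : ℕ) (c s)) with hQ
  have hQcoeff : ∀ j i : ℕ, (Q.coeff j).coeff i =
      ∑ s : ι, if (s.1 : ℕ) = j ∧ (s.2 : ℕ) = i then c s else 0 := by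
    intro j i
    rw [hQ, Polynomial.finset_sum_coeff]
    have h1 : (∑ s : ι,
        (Polynomial.monomial (s.1 : ℕ) (Polynomial.monomial (s.2 : ℕ) (c s))).coeff j).coeff i
        = ∑ s : ι,
          ((Polynomial.monomial (s.1 : ℕ) (Polynomial.monomial (s.2 : ℕ) (c s))).coeff j).coeff i := by
      rw [Polynomial.finset_sum_coeff]
    rw [h1]
    refine Finset.sum_congr rfl fun s _ => ?_
    rw [Polynomial.coeff_monomial]
    by_cases h1 : (s.1 : ℕ) = j <;> by_cases h2 : (s.2 : ℕ) = i <;>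
      simp [h1, h2, Polynomial.coeff_monomial]
  have key : ∀ s₀ : ι, (Q.coeff (s₀.1 : ℕ)).coeff (s₀.2 : ℕ) = c s₀ := by
    intro s₀
    rw [hQcoeff]
    rw [Finset.sum_eq_single s₀]
    · simp
    · intro s _ hne
      rw [if_neg]
      rintro ⟨h1, h2⟩
      apply hne
      obtain ⟨a, b⟩ := s
      obtain ⟨a', b'⟩ := s₀
      simp only at h1 h2
      have ha : a = a' := Fin.ext h1
      subst ha
      have hb : b = b' := Fin.ext h2
      subst hb
      rfl
    · intro h; exact absurd (Finset.mem_univ s₀) h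
  have hvanish : ∀ j i : ℕ, (Q.coeff j).coeff i ≠ 0 → j < ℓ + 1 ∧ i < m j := by
    intro j i h
    by_contra hcon
    apply h
    rw [hQcoeff]
    refine Finset.sum_eq_zero fun s _ => ?_
    rw [if_neg]
    rintro ⟨h1, h2⟩
    apply hcon
    refine ⟨h1 ▸ s.1.isLt, ?_⟩
    have := s.2.isLt
    rw [h2, h1] at this
    exact this
  refine ⟨Q, ?_, ?_, ?_, ?_⟩
  · -- Q ≠ 0
    intro hQ0
    apply hc0
    funext s
    have := key s
    rw [hQ0] at this
    simpa using this.symm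
  · -- natDegree ≤ ℓ
    refine Polynomial.natDegree_le_iff_coeff_eq_zero.mpr fun j hj => ?_
    apply Polynomial.ext
    intro i
    rw [Polynomial.coeff_zero]
    by_contra h
    have := (hvanish j i h).1
    omega
  · -- coefficient degree bound
    intro j i h
    obtain ⟨hj, hi⟩ := hvanish j i h
    have h2 : (i : ℤ) ≤ d j - 1 := by
      simp only [hm] at hi
      omega
    simp only [hd] at h2
    linarith
  · -- evaluation
    intro i
    have h0 := hφc i
    simp only [evalBiv, hQ, Polynomial.map_sum, Polynomial.map_monomial,
      Polynomial.eval_finset_sum, Polynomial.eval_monomial, Polynomial.eval_monomial,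
      Polynomial.coe_evalRingHom, Polynomial.eval_monomial]
    rw [← h0]
    refine Finset.sum_congr rfl fun s _ => ?_
    ring
end

section
/- (Sudan root-finding) Let Q(X,Y) = Σ_{j=0}^ℓ Qⱼ(X)Yʲ be nonzero with deg Qⱼ ≤ n − T − 1 − j(k−1) and Q(αᵢ,yᵢ) = 0 for distinct α₁,…,αₙ. If P ∈ F[X] has deg P < k and |{i : P(αᵢ) ≠ yᵢ}| ≤ T − 1, then Y − P(X) divides Q(X,Y) in F[X][Y]; in particular Q(X, P(X)) = 0. -/
open Polynomial

noncomputable section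
open scoped Classical

theorem stmt_16 {F : Type*} [Field F] {n k ℓ T : ℕ}
    (hk : 1 ≤ k) (hℓ : 1 ≤ ℓ) (hT : 1 ≤ T)
    (α : Fin n → F) (hα : Function.Injective α) (y : Fin n → F)
    (Q : Polynomial (Polynomial F)) (hQ0 : Q ≠ 0) (hQℓ : Q.natDegree ≤ ℓ)
    (hdeg : ∀ j i : ℕ, (Q.coeff j).coeff i ≠ 0 →
      (i : ℤ) ≤ (n : ℤ) - T - 1 - j * (k - 1))
    (hint : ∀ i, evalBiv Q (α i) (y i) = 0)
    (P : Polynomial F) (hP : P.degree < (k : ℕ))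
    (herr : (Finset.univ.filter fun i : Fin n => P.eval (α i) ≠ y i).card ≤ T - 1) :
    (Polynomial.X - Polynomial.C P) ∣ Q ∧ Q.eval P = 0 := by
  have hPnd : P.natDegree ≤ k - 1 := by
    rcases eq_or_ne P 0 with rfl | hP0
    · simp
    · have h := (Polynomial.natDegree_lt_iff_degree_lt hP0).mpr (by simpa using hP)
      omega
  set R : Polynomial F := Q.eval P with hR
  -- coefficient bound on R
  have hcoeff : ∀ m : ℕ, (n : ℤ) - T ≤ m → R.coeff m = 0 := by
    intro m hm
    have hRsum : R = ∑ j ∈ Q.support, Q.coeff j * P ^ j := by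
      rw [hR, Polynomial.eval_eq_sum, Polynomial.sum]
    rw [hRsum, Polynomial.finset_sum_coeff]
    refine Finset.sum_eq_zero fun j hj => ?_
    have hcj : Q.coeff j ≠ 0 := Polynomial.mem_support_iff.mp hj
    have hcjd : ((Q.coeff j).natDegree : ℤ) ≤ (n : ℤ) - T - 1 - j * (k - 1) :=
      hdeg j _ (Polynomial.leadingCoeff_ne_zero.mpr hcj)
    apply Polynomial.coeff_eq_zero_of_natDegree_lt
    have h1 : (Q.coeff j * P ^ j).natDegree ≤ (Q.coeff j).natDegree + j * P.natDegree := by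
      calc (Q.coeff j * P ^ j).natDegree ≤ (Q.coeff j).natDegree + (P ^ j).natDegree :=
            Polynomial.natDegree_mul_le
        _ ≤ (Q.coeff j).natDegree + j * P.natDegree := by
            have := Polynomial.natDegree_pow_le (p := P) (n := j)
            omega
    have h2 : (j : ℤ) * P.natDegree ≤ j * (k - 1) := by
      have : (P.natDegree : ℤ) ≤ (k : ℤ) - 1 := by
        have : ((k : ℤ)) - 1 = ((k - 1 : ℕ) : ℤ) := by omega
        rw [this]; exact_mod_cast hPnd
      exact mul_le_mul_of_nonneg_left this (by positivity)
    have : ((Q.coeff j * P ^ j).natDegree : ℤ) < m := by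
      have := h1
      push_cast at this ⊢
      nlinarith [hcjd, h2, hm]
    exact_mod_cast this
  -- R vanishes at good points
  have hroot : ∀ i : Fin n, P.eval (α i) = y i → R.eval (α i) = 0 := by
    intro i hi
    have : R.eval (α i) = evalBiv Q (α i) (y i) := by
      rw [hR, evalBiv, ← hi]
      rw [Polynomial.eval_map]
      have h2 : eval (α i) P = (Polynomial.evalRingHom (α i)) P := rfl
      rw [h2, Polynomial.eval₂_at_apply]
      simp
    rw [this, hint]
  -- R = 0
  have hR0 : R = 0 := by
    by_contra hne
    set S : Finset (Fin n) := Finset.univ.filter fun i => P.eval (α i) = y i with hS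
    have hScard : n - (T - 1) ≤ S.card := by
      have hcompl : S = (Finset.univ.filter fun i : Fin n => P.eval (α i) ≠ y i)ᶜ := by
        ext i; simp [hS]
      rw [hcompl, Finset.card_compl]
      simp only [Fintype.card_fin]
      omega
    have hdegR : (R.natDegree : ℤ) < (n : ℤ) - T := by
      by_contra h
      push_neg at h
      exact Polynomial.leadingCoeff_ne_zero.mpr hne (hcoeff _ h)
    have himg : (S.image α).card = S.card := Finset.card_image_of_injective _ hα
    have hzero : R = 0 := by
      apply Polynomial.eq_zero_of_natDegree_lt_card_of_eval_eq_zero' R (S.image α)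
      · intro x hx
        obtain ⟨i, hi, rfl⟩ := Finset.mem_image.mp hx
        exact hroot i (by simpa [hS] using hi)
      · rw [himg]
        -- natDegree R < card S : from ℤ inequalities
        have : (S.card : ℤ) ≥ (n : ℤ) - (T - 1) := by
          have : ((n - (T - 1) : ℕ) : ℤ) ≤ S.card := by exact_mod_cast hScard
          -- need n ≥ T - 1? use: (n:ℤ) - (T-1) ≤ ((n - (T-1) :ℕ):ℤ)
          have h2 : (n : ℤ) - ((T - 1 : ℕ) : ℤ) ≤ ((n - (T - 1) : ℕ) : ℤ) := by
            omega
          have h3 : ((T - 1 : ℕ) : ℤ) = (T : ℤ) - 1 := by omega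
          omega
        omega
    exact hne hzero
  refine ⟨?_, hR0⟩
  exact Polynomial.dvd_iff_isRoot.mpr hR0
end
end

section
/- Let α₁,…,αₙ be distinct, s ≥ 1, and Q ∈ F[X,Y] nonzero with deg_Y Q ≤ ℓ vanishing with multiplicity at least s at every point (αᵢ, yᵢ). Then for any P ∈ F[X] with deg P < k agreeing with y in at least A positions, (∏_{i : P(αᵢ)=yᵢ}(X−αᵢ))^s divides Q(X,P(X)); hence if the (1, k−1)-weighted degree of Q is less than s·A, then Q(X,P(X)) = 0. -/
open Polynomial

lemma hasseEval_eq {F : Type*} [Field F] (Q : Polynomial (Polynomial F)) (a b : ℕ) (α β : F) :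
    (Polynomial.taylor α ((Polynomial.taylor (C β) Q).coeff b)).coeff a = hasseEval Q a b α β := by
  rw [Polynomial.taylor_coeff, Polynomial.taylor_coeff]
  rw [hasseEval, Polynomial.eval_eq_sum (p := Q.hasseDeriv b), Polynomial.sum, Polynomial.sum,
    map_sum, Polynomial.eval_finset_sum]
  refine Finset.sum_congr rfl fun j hj => ?_
  rw [← C_pow, mul_comm, ← smul_eq_C_mul, map_smul, smul_eq_C_mul, eval_mul, eval_C, mul_comm]

lemma key_dvd {F : Type*} [Field F] (Q : Polynomial (Polynomial F)) (s : ℕ) (α β : F)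
    (h : rootMultAtLeast Q s α β) (P : Polynomial F) (hP : P.eval α = β) :
    (X - C α) ^ s ∣ Q.eval P := by
  have hdvd1 : (X - C α) ∣ (P - C β) := by
    rw [dvd_iff_isRoot]; simp [IsRoot, hP]
  conv_rhs => rw [← Polynomial.sum_taylor_eq Q (C β)]
  rw [Polynomial.sum, Polynomial.eval_finset_sum]
  refine Finset.dvd_sum fun b hb => ?_
  rw [eval_mul, eval_C, eval_pow, eval_sub, eval_X, eval_C]
  conv_rhs => rw [← Polynomial.sum_taylor_eq ((Polynomial.taylor (C β) Q).coeff b) α]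
  rw [Polynomial.sum, Finset.sum_mul]
  refine Finset.dvd_sum fun a ha => ?_
  by_cases hab : a + b < s
  · rw [hasseEval_eq, h a b hab]
    simp
  · refine dvd_trans (pow_dvd_pow _ (not_lt.mp hab)) ?_
    rw [pow_add]
    exact mul_dvd_mul (dvd_mul_left _ _) (pow_dvd_pow_of_dvd hdvd1 b)

noncomputable section
open scoped Classical

theorem stmt_18 {F : Type*} [Field F] {n s k ℓ A : ℕ}
    (hs : 1 ≤ s) (hk : 1 ≤ k) (hA : 1 ≤ A)
    (α : Fin n → F) (hα : Function.Injective α) (y : Fin n → F)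
    (Q : Polynomial (Polynomial F)) (hQ0 : Q ≠ 0) (hQℓ : Q.natDegree ≤ ℓ)
    (hmult : ∀ i, rootMultAtLeast Q s (α i) (y i))
    (P : Polynomial F) (hP : P.degree < (k : ℕ))
    (hagree : A ≤ (Finset.univ.filter fun i : Fin n => P.eval (α i) = y i).card) :
    ((∏ i ∈ Finset.univ.filter (fun i : Fin n => P.eval (α i) = y i),
        (Polynomial.X - Polynomial.C (α i))) ^ s ∣ Q.eval P) ∧
      ((∀ i j : ℕ, (Q.coeff j).coeff i ≠ 0 → i + j * (k - 1) < s * A) →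
        Q.eval P = 0) := by
  set T := Finset.univ.filter fun i : Fin n => P.eval (α i) = y i with hT
  have hdvd : (∏ i ∈ T, (X - C (α i))) ^ s ∣ Q.eval P := by
    rw [← Finset.prod_pow]
    refine Finset.prod_dvd_of_coprime ?_ ?_
    · intro i _ j _ hij
      exact (Polynomial.pairwise_coprime_X_sub_C hα hij).pow
    · intro i hi
      exact key_dvd Q s (α i) (y i) (hmult i) P (Finset.mem_filter.mp hi).2
  refine ⟨hdvd, fun hw => ?_⟩
  by_contra hR0
  -- degree of P is at most k - 1
  have hPdeg : P.natDegree ≤ k - 1 := by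
    rcases eq_or_ne P 0 with rfl | hP0
    · simp
    · have : P.natDegree < k := (Polynomial.natDegree_lt_iff_degree_lt hP0).mpr hP
      omega
  -- natDegree of Q.eval P is < s * A
  have hRdeg : (Q.eval P).natDegree < s * A := by
    rw [Polynomial.natDegree_lt_iff_degree_lt hR0]
    rw [Polynomial.eval_eq_sum, Polynomial.sum]
    refine lt_of_le_of_lt (Polynomial.degree_sum_le _ _) ?_
    rw [Finset.sup_lt_iff (by exact_mod_cast WithBot.bot_lt_coe (s * A))]
    intro j hj
    rcases eq_or_ne (Q.coeff j * P ^ j) 0 with h0 | h0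
    · rw [h0, Polynomial.degree_zero]
      exact WithBot.bot_lt_coe _
    · rw [← Polynomial.natDegree_lt_iff_degree_lt h0]
      have h1 : (Q.coeff j * P ^ j).natDegree ≤ (Q.coeff j).natDegree + j * (k - 1) := by
        refine le_trans (Polynomial.natDegree_mul_le) ?_
        gcongr
        exact le_trans (Polynomial.natDegree_pow_le) (by gcongr)
      have h2 : (Q.coeff j).coeff (Q.coeff j).natDegree ≠ 0 :=
        Polynomial.leadingCoeff_ne_zero.mpr (by rintro h; simp [h] at h0)
      exact lt_of_le_of_lt h1 (hw _ j h2)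
  -- but the divisor has natDegree s * T.card ≥ s * A
  have hprodne : (∏ i ∈ T, (X - C (α i))) ≠ 0 :=
    Finset.prod_ne_zero_iff.mpr fun i _ => Polynomial.X_sub_C_ne_zero _
  have hDdeg : ((∏ i ∈ T, (X - C (α i))) ^ s).natDegree = s * T.card := by
    rw [Polynomial.natDegree_pow, Polynomial.natDegree_prod _ _ fun i _ => Polynomial.X_sub_C_ne_zero _]
    simp [mul_comm]
  have := Polynomial.natDegree_le_of_dvd hdvd hR0
  rw [hDdeg] at this
  have : s * A ≤ s * T.card := by gcongr
  omega
end
end
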